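/- First isomorphism theorem for hom-modules: let f : M → M' be a morphism of right R-hom-modules over a non-unital hom-associative ring R. Then ker f is a hom-submodule of M, im f is a hom-submodule of M', and the map g : M/ker f → im f given by g(m + ker f) = f(m) is a well-defined bijective morphism of right R-hom-modules, so M/ker f ≅ im f. -/
import Mathlib


/-- A non-unital hom-associative ring structure on an additive abelian group `R`:
a biadditive multiplication `mul` and an additive twisting map `α` satisfying
`α a * (b * c) = (a * b) * α c`. -/
structure IsHomRing {R : Type*} [AddCommGroup R] (mul : R → R → R) (α : R → R) : Prop where
  add_mul : ∀ a b c : R, mul (a + b) c = mul a c + mul b c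
  mul_add : ∀ a b c : R, mul a (b + c) = mul a b + mul a c
  alpha_add : ∀ a b : R, α (a + b) = α a + α b
  hom_assoc : ∀ a b c : R, mul (α a) (mul b c) = mul (mul a b) (α c)

/-- A right `R`-hom-module structure on an additive abelian group `M`:
a biadditive scalar multiplication `smul : M → R → M` and an additive map `αM`
satisfying `αM m • (r * s) = (m • r) • αR s`. -/
structure IsHomModule {R M : Type*} [AddCommGroup R] [AddCommGroup M]
    (mul : R → R → R) (αR : R → R) (smul : M → R → M) (αM : M → M) : Prop where
  add_smul : ∀ (m n : M) (r : R), smul (m + n) r = smul m r + smul n r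
  smul_add : ∀ (m : M) (r s : R), smul m (r + s) = smul m r + smul m s
  alpha_add : ∀ m n : M, αM (m + n) = αM m + αM n
  hom_assoc : ∀ (m : M) (r s : R), smul (αM m) (mul r s) = smul (smul m r) (αR s)

/-- A hom-submodule: an additive subgroup (as a set) closed under the scalar
multiplication and invariant under the twisting map. -/
structure IsHomSubmodule {R M : Type*} [AddCommGroup M]
    (smul : M → R → M) (αM : M → M) (N : Set M) : Prop where
  zero_mem : (0 : M) ∈ N
  add_mem : ∀ a b : M, a ∈ N → b ∈ N → a + b ∈ N
  neg_mem : ∀ a : M, a ∈ N → -a ∈ N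
  smul_mem : ∀ a : M, a ∈ N → ∀ r : R, smul a r ∈ N
  alpha_mem : ∀ a : M, a ∈ N → αM a ∈ N

/-- A morphism of right `R`-hom-modules: an additive map commuting with the
twisting maps and preserving scalar multiplication. -/
def IsHomModuleHom {R M M' : Type*} [AddCommGroup M] [AddCommGroup M']
    (smul : M → R → M) (αM : M → M) (smul' : M' → R → M') (αM' : M' → M')
    (f : M → M') : Prop :=
  (∀ a b : M, f (a + b) = f a + f b) ∧ (∀ m : M, f (αM m) = αM' (f m)) ∧
    ∀ (m : M) (r : R), f (smul m r) = smul' (f m) r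

/-- A right hom-module is hom-noetherian if it has no infinite strictly
ascending chain of hom-submodules. -/
def HomNoetherian {R M : Type*} [AddCommGroup M] (smul : M → R → M) (αM : M → M) : Prop :=
  ¬ ∃ c : ℕ → Set M, (∀ n, IsHomSubmodule smul αM (c n)) ∧ ∀ n, c n ⊂ c (n + 1)

/-- the first isomorphism theorem for hom-modules. For a morphism
f : M → M' of right R-hom-modules, ker f is a hom-submodule of M, im f is a
hom-submodule of M', and m + ker f ↦ f(m) is a well-defined bijective morphism
of right R-hom-modules from M/ker f onto im f. -/
theorem first_isomorphism_theorem {R M M' : Type*} [AddCommGroup R] [AddCommGroup M]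
    [AddCommGroup M'] (mul : R → R → R) (αR : R → R) (hR : IsHomRing mul αR)
    (smul : M → R → M) (αM : M → M) (hM : IsHomModule mul αR smul αM)
    (smul' : M' → R → M') (αM' : M' → M') (hM' : IsHomModule mul αR smul' αM')
    (f : M → M') (hf : IsHomModuleHom smul αM smul' αM' f)
    (qsmul : M ⧸ (AddMonoidHom.mk' f hf.1).ker → R → M ⧸ (AddMonoidHom.mk' f hf.1).ker)
    (qα : M ⧸ (AddMonoidHom.mk' f hf.1).ker → M ⧸ (AddMonoidHom.mk' f hf.1).ker)
    (hqsmul : ∀ (m : M) (r : R),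
      qsmul (QuotientAddGroup.mk m) r = QuotientAddGroup.mk (smul m r))
    (hqα : ∀ m : M, qα (QuotientAddGroup.mk m) = QuotientAddGroup.mk (αM m)) :
    IsHomSubmodule smul αM {m : M | f m = 0} ∧
    IsHomSubmodule smul' αM' (Set.range f) ∧
    ∃ g : M ⧸ (AddMonoidHom.mk' f hf.1).ker → M',
      (∀ m : M, g (QuotientAddGroup.mk m) = f m) ∧
      Function.Injective g ∧ Set.range g = Set.range f ∧
      IsHomModuleHom qsmul qα smul' αM' g := by
  obtain ⟨hadd, halpha, hsmul⟩ := hf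
  set F : M →+ M' := AddMonoidHom.mk' f hadd with hF
  have hker : ∀ m : M, m ∈ F.ker ↔ f m = 0 := fun m => Iff.rfl
  refine ⟨⟨?_, ?_, ?_, ?_, ?_⟩, ⟨?_, ?_, ?_, ?_, ?_⟩, ?_⟩
  · exact F.map_zero
  · intro a b ha hb; show f (a+b) = 0; rw [hadd, ha, hb, add_zero]
  · intro a ha; show f (-a) = 0
    have : f (-a) = F (-a) := rfl
    rw [this, F.map_neg]; show -(f a) = 0; rw [ha, neg_zero]
  · intro a ha r; show f (smul a r) = 0
    rw [hsmul, ha]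
    have := hsmul 0 r
    have h0 : f (0:M) = 0 := F.map_zero
    have hs0 : smul (0:M) r = 0 := by
      have := hM.add_smul 0 0 r
      simpa using this.symm
    calc smul' (0:M') r = smul' (f 0) r := by rw [h0]
      _ = f (smul 0 r) := (hsmul 0 r).symm
      _ = 0 := by rw [hs0, h0]
  · intro a ha; show f (αM a) = 0; rw [halpha, ha]
    have := hM'.alpha_add 0 0
    simpa using this.symm
  · exact ⟨0, F.map_zero⟩
  · rintro _ _ ⟨a, rfl⟩ ⟨b, rfl⟩; exact ⟨a + b, hadd a b⟩
  · rintro _ ⟨a, rfl⟩; exact ⟨-a, F.map_neg a⟩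
  · rintro _ ⟨a, rfl⟩ r; exact ⟨smul a r, hsmul a r⟩
  · rintro _ ⟨a, rfl⟩; exact ⟨αM a, halpha a⟩
  · refine ⟨QuotientAddGroup.kerLift F, fun m => rfl, QuotientAddGroup.kerLift_injective F, ?_, ?_, ?_, ?_⟩
    · ext x; constructor
      · rintro ⟨q, rfl⟩
        obtain ⟨m, rfl⟩ := QuotientAddGroup.mk_surjective q
        exact ⟨m, rfl⟩
      · rintro ⟨m, rfl⟩; exact ⟨QuotientAddGroup.mk m, rfl⟩
    · intro a b; exact (QuotientAddGroup.kerLift F).map_add a b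
    · intro q
      obtain ⟨m, rfl⟩ := QuotientAddGroup.mk_surjective q
      rw [hqα]
      show f (αM m) = αM' (f m)
      exact halpha m
    · intro q r
      obtain ⟨m, rfl⟩ := QuotientAddGroup.mk_surjective q
      rw [hqsmul]
      exact hsmul m r
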